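/- Let φ: ℝ → ℝ be continuous and let C_φ: C(ℝ) → C(ℝ), g ↦ g ∘ φ, be the composition operator on the space C(ℝ) of continuous real-valued functions on ℝ endowed with the compact-open topology. Then C_φ is supercyclic if and only if C_φ is mixing. -/

import Mathlib

open Filter Topology

open Set Uniformity Function

/-- The `n`-th iterate of a continuous self-map of `ℝ`, as a continuous map. -/
noncomputable def cmIter (φ : C(ℝ, ℝ)) (n : ℕ) : C(ℝ, ℝ) :=
  ⟨(⇑φ)^[n], φ.continuous.iterate n⟩

lemma cmIter_apply (φ : C(ℝ, ℝ)) (n : ℕ) (x : ℝ) : cmIter φ n x = (⇑φ)^[n] x := rfl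

lemma ball_mem_nhds (f : C(ℝ,ℝ)) {K : Set ℝ} (hK : IsCompact K) {ε : ℝ} (hε : 0 < ε) :
    {h : C(ℝ,ℝ) | ∀ x ∈ K, |h x - f x| < ε} ∈ 𝓝 f := by
  rw [nhds_eq_comap_uniformity]
  have hmem : {fg : C(ℝ,ℝ) × C(ℝ,ℝ) | ∀ x ∈ K, (fg.1 x, fg.2 x) ∈
      {q : ℝ × ℝ | dist q.1 q.2 < ε}} ∈ 𝓤 C(ℝ,ℝ) := by
    rw [ContinuousMap.mem_compactConvergence_entourage_iff]
    exact ⟨K, {q : ℝ × ℝ | dist q.1 q.2 < ε}, hK, Metric.dist_mem_uniformity hε, subset_rfl⟩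
  refine ⟨_, hmem, ?_⟩
  intro h hh x hx
  simpa [Real.dist_eq, abs_sub_comm] using hh x hx

lemma dense_hit {S : Set C(ℝ,ℝ)} (hS : Dense S) (f : C(ℝ,ℝ)) {K : Set ℝ}
    (hK : IsCompact K) {ε : ℝ} (hε : 0 < ε) :
    ∃ s ∈ S, ∀ x ∈ K, |s x - f x| < ε := by
  have := (mem_closure_iff_nhds.1 (hS f)) _ (ball_mem_nhds f hK hε)
  obtain ⟨s, hs1, hs2⟩ := this
  exact ⟨s, hs2, hs1⟩

lemma nhds_subset (f : C(ℝ,ℝ)) {U : Set C(ℝ,ℝ)} (hU : U ∈ 𝓝 f) :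
    ∃ M ε : ℝ, 0 < M ∧ 0 < ε ∧
      {h : C(ℝ,ℝ) | ∀ x ∈ Icc (-M) M, |h x - f x| < ε} ⊆ U := by
  rw [nhds_eq_comap_uniformity] at hU
  obtain ⟨V, hV, hVU⟩ := hU
  rw [ContinuousMap.mem_compactConvergence_entourage_iff] at hV
  obtain ⟨K, W, hK, hW, hWV⟩ := hV
  obtain ⟨ε, hε, hball⟩ := Metric.mem_uniformity_dist.1 hW
  obtain ⟨M, hM⟩ := hK.isBounded.subset_closedBall 0
  refine ⟨max M 1, ε, lt_of_lt_of_le one_pos (le_max_right _ _), hε, fun h hh => ?_⟩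
  apply hVU; apply hWV
  intro x hx
  have hx' : x ∈ Icc (-(max M 1)) (max M 1) := by
    have := hM hx
    simp only [Metric.mem_closedBall, Real.dist_eq, sub_zero] at this
    have := abs_le.1 this
    constructor
    · linarith [le_max_left M 1, this.1]
    · linarith [le_max_left M 1, this.2]
  exact hball (by simpa [Real.dist_eq, abs_sub_comm] using hh x hx')

noncomputable def ramp (b c x : ℝ) : ℝ := max 0 (min 1 ((x - b) / (c - b)))

lemma ramp_continuous (b c : ℝ) : Continuous (ramp b c) := by
  unfold ramp; fun_prop

lemma ramp_of_le {b c x : ℝ} (h : x ≤ b) (hbc : b ≤ c) : ramp b c x = 0 := by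
  unfold ramp
  have h1 : (x - b) / (c - b) ≤ 0 := div_nonpos_iff.2 (Or.inr ⟨by linarith, by linarith⟩)
  have : min 1 ((x - b) / (c - b)) ≤ 0 := le_trans (min_le_right _ _) h1
  exact max_eq_left this

lemma ramp_of_ge {b c x : ℝ} (h : c ≤ x) (hbc : b < c) : ramp b c x = 1 := by
  unfold ramp
  have h1 : (1:ℝ) ≤ (x - b) / (c - b) := (one_le_div (by linarith)).2 (by linarith)
  rw [min_eq_left h1]
  exact max_eq_right zero_le_one

noncomputable def glue (F G : ℝ → ℝ) (b c : ℝ) : ℝ → ℝ :=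
  fun x => (1 - ramp b c x) * F (min x b) + ramp b c x * G (max x c)

lemma glue_continuous {F G : ℝ → ℝ} (hF : Continuous F) (hG : Continuous G) (b c : ℝ) :
    Continuous (glue F G b c) := by
  unfold glue
  have h1 := ramp_continuous b c
  fun_prop

lemma glue_left {F G : ℝ → ℝ} {b c x : ℝ} (hbc : b ≤ c) (h : x ≤ b) :
    glue F G b c x = F x := by
  unfold glue
  rw [ramp_of_le h hbc, min_eq_left h]
  ring

lemma glue_right {F G : ℝ → ℝ} {b c x : ℝ} (hbc : b < c) (h : c ≤ x) :
    glue F G b c x = G x := by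
  unfold glue
  rw [ramp_of_ge h hbc, max_eq_left h]
  ring

lemma exists_inverse {ψ : ℝ → ℝ} (hc : Continuous ψ) (hmono : StrictMono ψ)
    {a b : ℝ} (hab : a ≤ b) (f' : C(ℝ,ℝ)) :
    ∃ G : C(ℝ,ℝ), ∀ x ∈ Icc a b, G (ψ x) = f' x := by
  have hψab : ψ a ≤ ψ b := hmono.monotone hab
  have hmaps : ∀ x : Icc a b, ψ (x : ℝ) ∈ Icc (ψ a) (ψ b) := fun x =>
    ⟨hmono.monotone x.2.1, hmono.monotone x.2.2⟩
  let e : Icc a b → Icc (ψ a) (ψ b) := fun x => ⟨ψ x, hmaps x⟩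
  have hbij : Function.Bijective e := by
    constructor
    · intro x y hxy
      exact Subtype.ext (hmono.injective (congrArg Subtype.val hxy))
    · rintro ⟨y, hy⟩
      obtain ⟨x, hx, hx2⟩ := intermediate_value_Icc hab hc.continuousOn hy
      exact ⟨⟨x, hx⟩, Subtype.ext hx2⟩
  let E : Icc a b ≃ Icc (ψ a) (ψ b) := Equiv.ofBijective e hbij
  have hE : Continuous E := Continuous.subtype_mk (hc.comp continuous_subtype_val) _
  let H := Continuous.homeoOfEquivCompactToT2 (f := E) hE
  refine ⟨⟨fun y => f' ((H.symm (projIcc (ψ a) (ψ b) hψab y) : Icc a b) : ℝ), ?_⟩, ?_⟩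
  · exact f'.continuous.comp (continuous_subtype_val.comp
      (H.symm.continuous.comp (continuous_projIcc)))
  · intro x hx
    have h1 : projIcc (ψ a) (ψ b) hψab (ψ x) = ⟨ψ x, hmaps ⟨x, hx⟩⟩ :=
      projIcc_of_mem hψab (hmaps ⟨x, hx⟩)
    have h2 : H ⟨x, hx⟩ = ⟨ψ x, hmaps ⟨x, hx⟩⟩ := rfl
    simp only [ContinuousMap.coe_mk, h1, ← h2, Homeomorph.symm_apply_apply]

lemma iter_ge {ψ : ℝ → ℝ} (hm : Monotone ψ) {y : ℝ} (h : y ≤ ψ y) (n : ℕ) :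
    y ≤ ψ^[n] y := by
  induction n with
  | zero => simp
  | succ n ih =>
    rw [Function.iterate_succ_apply']
    exact le_trans h (hm ih)

lemma iter_le {ψ : ℝ → ℝ} (hm : Monotone ψ) {y : ℝ} (h : ψ y ≤ y) (n : ℕ) :
    ψ^[n] y ≤ y := by
  induction n with
  | zero => simp
  | succ n ih =>
    rw [Function.iterate_succ_apply']
    exact le_trans (hm ih) h

lemma iter_mem_Icc_right {ψ : ℝ → ℝ} (hm : Monotone ψ) {p y : ℝ} (hp : ψ p = p)
    (hpy : p ≤ y) (h : ψ y ≤ y) (n : ℕ) : ψ^[n] y ∈ Icc p y := by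
  refine ⟨?_, iter_le hm h n⟩
  induction n with
  | zero => simpa using hpy
  | succ n ih =>
    rw [Function.iterate_succ_apply']
    calc p = ψ p := hp.symm
    _ ≤ ψ (ψ^[n] y) := hm ih

lemma iter_mem_Icc_left {ψ : ℝ → ℝ} (hm : Monotone ψ) {p y : ℝ} (hp : ψ p = p)
    (hyp : y ≤ p) (h : y ≤ ψ y) (n : ℕ) : ψ^[n] y ∈ Icc y p := by
  refine ⟨iter_ge hm h n, ?_⟩
  induction n with
  | zero => simpa using hyp
  | succ n ih =>
    rw [Function.iterate_succ_apply']
    calc ψ (ψ^[n] y) ≤ ψ p := hm ih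
    _ = p := hp

lemma exists_iterate_gt {φ : ℝ → ℝ} (hc : Continuous φ) (hgt : ∀ x, x < φ x) (a C : ℝ) :
    ∃ N, ∀ n ≥ N, C < φ^[n] a := by
  have hmono : Monotone fun n => φ^[n] a := monotone_nat_of_le_succ fun n => by
    rw [Function.iterate_succ_apply']; exact (hgt _).le
  by_contra hcon
  push_neg at hcon
  have hbd : ∀ n, φ^[n] a ≤ C := by
    intro n
    obtain ⟨m, hm1, hm2⟩ := hcon n
    exact le_trans (hmono hm1) hm2
  have hbdd : BddAbove (range fun n => φ^[n] a) := ⟨C, by rintro _ ⟨n, rfl⟩; exact hbd n⟩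
  have htend : Tendsto (fun n => φ^[n] a) atTop (𝓝 (⨆ n, φ^[n] a)) :=
    tendsto_atTop_ciSup hmono hbdd
  have htend' : Tendsto (fun n => φ^[n+1] a) atTop (𝓝 (⨆ n, φ^[n] a)) :=
    htend.comp (tendsto_add_atTop_nat 1)
  have htend'' : Tendsto (fun n => φ (φ^[n] a)) atTop (𝓝 (φ (⨆ n, φ^[n] a))) :=
    (hc.continuousAt).tendsto.comp htend
  have : φ (⨆ n, φ^[n] a) = ⨆ n, φ^[n] a := by
    refine tendsto_nhds_unique ?_ htend'
    simpa [Function.iterate_succ_apply'] using htend''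
  exact absurd this (ne_of_gt (hgt _))

lemma exists_iterate_lt {φ : ℝ → ℝ} (hc : Continuous φ) (hlt : ∀ x, φ x < x) (a C : ℝ) :
    ∃ N, ∀ n ≥ N, φ^[n] a < C := by
  have hanti : Monotone fun n => -(φ^[n] a) := monotone_nat_of_le_succ fun n => by
    rw [Function.iterate_succ_apply']
    simp only [neg_le_neg_iff]
    exact (hlt _).le
  by_contra hcon
  push_neg at hcon
  have hbd : ∀ n, C ≤ φ^[n] a := by
    intro n
    obtain ⟨m, hm1, hm2⟩ := hcon n
    have h2 : -(φ^[n] a) ≤ -(φ^[m] a) := hanti hm1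
    linarith
  have hbdd : BddAbove (range fun n => -(φ^[n] a)) := by
    refine ⟨-C, ?_⟩
    rintro _ ⟨n, rfl⟩
    simpa using hbd n
  have htend : Tendsto (fun n => -(φ^[n] a)) atTop (𝓝 (⨆ n, -(φ^[n] a))) :=
    tendsto_atTop_ciSup hanti hbdd
  set L := ⨆ n, -(φ^[n] a)
  have htendL : Tendsto (fun n => φ^[n] a) atTop (𝓝 (-L)) := by
    simpa using htend.neg
  have htend' : Tendsto (fun n => φ^[n+1] a) atTop (𝓝 (-L)) :=
    htendL.comp (tendsto_add_atTop_nat 1)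
  have htend'' : Tendsto (fun n => φ (φ^[n] a)) atTop (𝓝 (φ (-L))) :=
    (hc.continuousAt).tendsto.comp htendL
  have : φ (-L) = -L := by
    refine tendsto_nhds_unique ?_ htend'
    simpa [Function.iterate_succ_apply'] using htend''
  exact absurd this (ne_of_lt (hlt _))

lemma dichotomy {φ : ℝ → ℝ} (hc : Continuous φ) (hnf : ∀ x, φ x ≠ x) :
    (∀ x, x < φ x) ∨ (∀ x, φ x < x) := by
  by_cases h : ∀ x, x < φ x
  · exact Or.inl h
  · push_neg at h
    obtain ⟨x₂, hx₂⟩ := h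
    have hx₂' : φ x₂ < x₂ := lt_of_le_of_ne hx₂ (hnf x₂)
    refine Or.inr fun x₁ => ?_
    by_contra hx₁
    push_neg at hx₁
    have hx₁' : x₁ < φ x₁ := lt_of_le_of_ne hx₁ fun h => (hnf x₁) h.symm
    have hcont : Continuous fun x => φ x - x := hc.sub continuous_id
    rcases le_total x₁ x₂ with hle | hle
    · have h0 : (0:ℝ) ∈ Icc (φ x₂ - x₂) (φ x₁ - x₁) := ⟨by linarith, by linarith⟩
      obtain ⟨z, _, hz⟩ := intermediate_value_Icc' hle hcont.continuousOn h0
      exact hnf z (by simp only [] at hz; linarith)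
    · have h0 : (0:ℝ) ∈ Icc (φ x₂ - x₂) (φ x₁ - x₁) := ⟨by linarith, by linarith⟩
      obtain ⟨z, _, hz⟩ := intermediate_value_Icc hle hcont.continuousOn h0
      exact hnf z (by simp only [] at hz; linarith)

lemma anti_fixed {φ : ℝ → ℝ} (hc : Continuous φ) (hanti : StrictAnti φ) :
    ∃ p, φ p = p := by
  have hcont : Continuous fun x => φ x - x := hc.sub continuous_id
  rcases lt_trichotomy (φ 0) 0 with h | h | h
  · have h1 : φ (φ 0) - φ 0 > 0 := by have := hanti h; linarith
    have h0 : (0:ℝ) ∈ Icc (φ 0 - 0) (φ (φ 0) - φ 0) := ⟨by linarith, by linarith⟩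
    obtain ⟨z, _, hz⟩ := intermediate_value_Icc' h.le hcont.continuousOn h0
    exact ⟨z, by simp only [] at hz; linarith⟩
  · exact ⟨0, h⟩
  · have h1 : φ (φ 0) - φ 0 < 0 := by have := hanti h; linarith
    have h0 : (0:ℝ) ∈ Icc (φ (φ 0) - φ 0) (φ 0 - 0) := ⟨by linarith, by linarith⟩
    obtain ⟨z, _, hz⟩ := intermediate_value_Icc' h.le hcont.continuousOn h0
    exact ⟨z, by simp only [] at hz; linarith⟩

lemma numA {r c v ε : ℝ} (hr : r ≠ 0) (hv : v ≠ r)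
    (hε1 : ε ≤ |v - r|/4) (hε2 : ε ≤ |r|/2)
    (h1 : |c * r - r| < ε) (h2 : |c * v - r| < ε) : False := by
  set d := |v - r| with hd
  have hd0 : 0 < d := abs_pos.2 (sub_ne_zero.2 hv)
  have hr0 : 0 < |r| := abs_pos.2 hr
  have key : |c| * d < 2*ε := by
    have e1 : |c| * d = |c * v - c * r| := by
      rw [hd, ← abs_mul]; congr 1; ring
    have e2 : |c * v - c * r| ≤ |c * v - r| + |c * r - r| := by
      have e3 : c * v - c * r = (c * v - r) - (c * r - r) := by ring
      rw [e3]; exact abs_sub _ _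
    linarith
  have hcc : |c| < 1/2 := by
    by_contra hc
    push_neg at hc
    have : (1/2) * d ≤ |c| * d := mul_le_mul_of_nonneg_right hc hd0.le
    linarith
  have h3 : |r| ≤ |c * r - r| + |c| * |r| := by
    have e4 : (c*r - r) - c*r = -r := by ring
    have e5 : |(c*r - r) - c*r| = |r| := by rw [e4, abs_neg]
    have h6 : |(c*r - r) - c*r| ≤ |c*r - r| + |c*r| := abs_sub _ _
    rw [e5, abs_mul] at h6
    exact h6
  have h4 : |c| * |r| ≤ (1/2) * |r| := mul_le_mul_of_nonneg_right hcc.le hr0.le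
  linarith

lemma numB {r c v t ε B : ℝ} (hr : r ≠ 0) (hB : |r| ≤ B) (hv : |v| ≤ B)
    (ht : t = 2 + 2*B) (hε1 : ε ≤ |r|) (hε2 : ε ≤ 1)
    (h1 : |c * r - r| < ε) (h2 : |c * v - t| < ε) : False := by
  have hr0 : 0 < |r| := abs_pos.2 hr
  have hB0 : 0 < B := lt_of_lt_of_le hr0 hB
  have hcr : |c| * |r| < 2 * |r| := by
    have e1 : |c| * |r| = |c * r| := (abs_mul c r).symm
    have e2 : |c * r| ≤ |c * r - r| + |r| := by
      have e3 : c * r = (c * r - r) + r := by ring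
      calc |c * r| = |(c * r - r) + r| := by rw [← e3]
      _ ≤ |c * r - r| + |r| := abs_add_le _ _
    linarith
  have hc2 : |c| < 2 := by
    by_contra hc
    push_neg at hc
    have : 2 * |r| ≤ |c| * |r| := mul_le_mul_of_nonneg_right hc hr0.le
    linarith
  have ht0 : 0 < t := by rw [ht]; linarith
  have h5 : t ≤ |c * v - t| + |c| * |v| := by
    have e4 : t = |t| := (abs_of_pos ht0).symm
    have e5 : (t : ℝ) = -(c*v - t) + c*v := by ring
    calc t = |t| := e4
    _ = |(-(c*v - t)) + c*v| := by rw [← e5]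
    _ ≤ |(-(c*v - t))| + |c*v| := abs_add_le _ _
    _ = |c * v - t| + |c| * |v| := by rw [abs_neg, abs_mul]
  have h6 : |c| * |v| ≤ 2 * B :=
    mul_le_mul hc2.le hv (abs_nonneg _) (by norm_num)
  rw [ht] at h5 h2
  linarith

lemma orbit_apply (φ g : C(ℝ,ℝ)) (c : ℝ) (n : ℕ) (x : ℝ) :
    (c • g.comp (cmIter φ n)) x = c * g ((⇑φ)^[n] x) := rfl

lemma iter_eq_of_eq {φ : ℝ → ℝ} {a b : ℝ} (hab : φ a = φ b) {n : ℕ} (hn : 1 ≤ n) :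
    φ^[n] a = φ^[n] b := by
  obtain ⟨m, rfl⟩ := Nat.exists_eq_add_of_le hn
  rw [add_comm, Function.iterate_succ_apply, Function.iterate_succ_apply, hab]

lemma inj_of_dense (φ g : C(ℝ,ℝ))
    (hS : Dense {h : C(ℝ,ℝ) | ∃ c : ℝ, ∃ n : ℕ, h = c • (g.comp (cmIter φ n))}) :
    Function.Injective ⇑φ := by
  have aux : ∀ a b : ℝ, a < b → φ a = φ b → False := by
    intro a b hlt hab
    by_cases hg : g a = g b
    · obtain ⟨s, hsS, hs⟩ := dense_hit hS (ContinuousMap.id ℝ)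
        (isCompact_Icc (a := a) (b := b)) (ε := (b - a)/2) (by linarith)
      obtain ⟨c, n, rfl⟩ := hsS
      have h1 := hs a ⟨le_refl a, hlt.le⟩
      have h2 := hs b ⟨hlt.le, le_refl b⟩
      rw [orbit_apply] at h1 h2
      have heq : c * g ((⇑φ)^[n] a) = c * g ((⇑φ)^[n] b) := by
        rcases Nat.eq_zero_or_pos n with rfl | hn
        · simp [hg]
        · rw [iter_eq_of_eq hab hn]
      simp only [ContinuousMap.id_apply] at h1 h2
      rw [heq] at h1
      have := abs_lt.1 h1
      have := abs_lt.1 h2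
      linarith
    · set x₀ : ℝ := 2 * b - a with hx₀
      have hbx₀ : b < x₀ := by rw [hx₀]; linarith
      set bump : C(ℝ,ℝ) := ⟨fun x => max 0 (1 - |x - x₀| / (b - a)), by fun_prop⟩ with hbump
      have hbump_a : bump a = 0 := by
        show max 0 (1 - |a - x₀| / (b - a)) = 0
        have h2 : a - x₀ = -(2*(b-a)) := by rw [hx₀]; ring
        rw [h2, abs_neg, abs_of_nonneg (by linarith)]
        have h3 : 2*(b-a)/(b-a) = 2 := by
          rw [mul_div_assoc, div_self (show b - a ≠ 0 by linarith), mul_one]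
        rw [h3]; norm_num
      have hbump_b : bump b = 0 := by
        show max 0 (1 - |b - x₀| / (b - a)) = 0
        have h2 : b - x₀ = -(b-a) := by rw [hx₀]; ring
        rw [h2, abs_neg, abs_of_nonneg (by linarith)]
        have h3 : (b-a)/(b-a) = 1 := div_self (show b - a ≠ 0 by linarith)
        rw [h3]; norm_num
      have hbump_x₀ : bump x₀ = 1 := by
        show max 0 (1 - |x₀ - x₀| / (b - a)) = 1
        simp
      set t : C(ℝ,ℝ) := g + bump with ht
      set m : ℝ := max |g a| |g b| with hm
      have hm0 : 0 < m := by
        rcases (show g a ≠ 0 ∨ g b ≠ 0 by by_contra hcc; push_neg at hcc; exact hg (by rw [hcc.1, hcc.2])) with h | h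
        · exact lt_max_of_lt_left (abs_pos.2 h)
        · exact lt_max_of_lt_right (abs_pos.2 h)
      set X : ℝ := |g x₀| with hX
      have hX0 : 0 ≤ X := abs_nonneg _
      set η : ℝ := min (|g a - g b|/2) (m/(2*(m + X))) with hη
      have hd0 : 0 < |g a - g b| := abs_pos.2 (sub_ne_zero.2 hg)
      have hη0 : 0 < η := lt_min (by linarith) (by positivity)
      obtain ⟨s, hsS, hs⟩ := dense_hit hS t (isCompact_Icc (a := a) (b := x₀)) hη0
      obtain ⟨c, n, rfl⟩ := hsS
      have hsa := hs a ⟨le_refl a, by linarith⟩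
      have hsb := hs b ⟨hlt.le, hbx₀.le⟩
      have hsx := hs x₀ ⟨by linarith, le_refl x₀⟩
      have hta : t a = g a := by rw [ht]; simp [hbump_a]
      have htb : t b = g b := by rw [ht]; simp [hbump_b]
      have htx : t x₀ = g x₀ + 1 := by rw [ht]; simp [hbump_x₀]
      rw [orbit_apply, hta] at hsa
      rw [orbit_apply, htb] at hsb
      rw [orbit_apply, htx] at hsx
      rcases Nat.eq_zero_or_pos n with rfl | hn
      · simp only [Function.iterate_zero_apply] at hsa hsb hsx
        set A : ℝ := |c - 1| with hA
        have hA0 : 0 ≤ A := abs_nonneg _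
        have h1 : A * |g a| < η := by
          rw [hA, ← abs_mul]
          have : (c-1) * g a = c * g a - g a := by ring
          rw [this]; exact hsa
        have h2 : A * |g b| < η := by
          rw [hA, ← abs_mul]
          have : (c-1) * g b = c * g b - g b := by ring
          rw [this]; exact hsb
        have hAm : A * m < η := by
          rcases max_cases |g a| |g b| with ⟨hcase, _⟩ | ⟨hcase, _⟩
          · rw [hm, hcase]; exact h1
          · rw [hm, hcase]; exact h2
        have h3 : 1 - A * X ≤ |c * g x₀ - (g x₀ + 1)| := by
          have heq1 : c * g x₀ - (g x₀ + 1) = (c - 1) * g x₀ - 1 := by ring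
          rw [heq1]
          calc 1 - A * X = 1 - |(c-1) * g x₀| := by rw [hA, hX, abs_mul]
          _ ≤ |1 - ((c-1) * g x₀)| := by
              have := abs_sub_abs_le_abs_sub 1 ((c-1) * g x₀)
              simp only [abs_one] at this
              linarith [this]
          _ = |(c-1) * g x₀ - 1| := abs_sub_comm _ _
        have h4 : 1 - A * X < η := lt_of_le_of_lt h3 hsx
        have hη2 : η * (2*(m + X)) ≤ m := by
          have h5 : η ≤ m/(2*(m + X)) := min_le_right _ _
          rw [div_eq_mul_inv] at h5
          have h6 : 0 < 2*(m+X) := by positivity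
          calc η * (2*(m+X)) ≤ (m * (2*(m+X))⁻¹) * (2*(m+X)) := by
                exact mul_le_mul_of_nonneg_right h5 h6.le
          _ = m := by field_simp
        nlinarith [mul_nonneg hA0 hX0, mul_nonneg hη0.le hX0]
      · have heq : (⇑φ)^[n] a = (⇑φ)^[n] b := iter_eq_of_eq hab hn
        rw [heq] at hsa
        have hle : |g a - g b| ≤ |c * g ((⇑φ)^[n] b) - g b| + |c * g ((⇑φ)^[n] b) - g a| := by
          have := abs_sub_abs_le_abs_sub (g a) (g b)
          calc |g a - g b| = |(c * g ((⇑φ)^[n] b) - g b) - (c * g ((⇑φ)^[n] b) - g a)| := by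
                congr 1; ring
          _ ≤ _ := abs_sub _ _
        have hη1 : η ≤ |g a - g b|/2 := min_le_left _ _
        linarith
  intro a b hab
  by_contra hne
  rcases lt_or_gt_of_ne hne with h | h
  · exact aux a b h hab
  · exact aux b a h hab.symm

lemma const_not_dense (φ g : C(ℝ,ℝ)) (r : ℝ) (hconst : ∀ y, g y = r)
    (hS : Dense {h : C(ℝ,ℝ) | ∃ c : ℝ, ∃ n : ℕ, h = c • (g.comp (cmIter φ n))}) :
    False := by
  obtain ⟨s, hsS, hs⟩ := dense_hit hS ⟨fun x => 3*x, by fun_prop⟩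
    (isCompact_Icc (a := (0:ℝ)) (b := 1)) one_pos
  obtain ⟨c, n, rfl⟩ := hsS
  have h1 := hs 0 ⟨le_refl _, zero_le_one⟩
  have h2 := hs 1 ⟨zero_le_one, le_refl _⟩
  rw [orbit_apply, hconst] at h1 h2
  simp only [ContinuousMap.coe_mk] at h1 h2
  norm_num at h1 h2
  have := abs_lt.1 (show |c * r| < 1 by rwa [abs_mul])
  have := abs_lt.1 h2
  linarith

lemma gp_ne_zero (φ g : C(ℝ,ℝ)) {p : ℝ} (hiterp : ∀ n, (⇑φ)^[n] p = p)
    (hS : Dense {h : C(ℝ,ℝ) | ∃ c : ℝ, ∃ n : ℕ, h = c • (g.comp (cmIter φ n))}) :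
    g p ≠ 0 := by
  intro h0
  obtain ⟨s, hsS, hs⟩ := dense_hit hS (ContinuousMap.const ℝ 1)
    (isCompact_Icc (a := p) (b := p)) one_half_pos
  obtain ⟨c, n, rfl⟩ := hsS
  have h1 := hs p ⟨le_refl _, le_refl _⟩
  rw [orbit_apply, hiterp, h0] at h1
  simp only [ContinuousMap.const_apply, mul_zero] at h1
  norm_num at h1

lemma no_fixed_of_dense_mono (φ g : C(ℝ,ℝ)) (hmono : StrictMono ⇑φ)
    (hS : Dense {h : C(ℝ,ℝ) | ∃ c : ℝ, ∃ n : ℕ, h = c • (g.comp (cmIter φ n))})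
    (p : ℝ) (hp : φ p = p) : False := by
  have hiterp : ∀ n, (⇑φ)^[n] p = p := fun n => Function.iterate_fixed hp n
  have hr0 : g p ≠ 0 := gp_ne_zero φ g hiterp hS
  set r : ℝ := g p with hr
  have habs : 0 < |r| := abs_pos.2 hr0
  have hclaim : ∀ y, g y = r := by
    intro y
    rcases le_total p y with hpy | hyp
    · rcases le_total y (φ y) with hA | hB
      · -- case A: escape upward, IVT preimage
        by_contra hne
        set ε : ℝ := min (|g y - r|/4) (|r|/2) with hε
        have hd0 : 0 < |g y - r| := abs_pos.2 (sub_ne_zero.2 hne)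
        have hε0 : 0 < ε := lt_min (by linarith) (by linarith)
        obtain ⟨s, hsS, hs⟩ := dense_hit hS (ContinuousMap.const ℝ r)
          (isCompact_Icc (a := p) (b := y)) hε0
        obtain ⟨c, n, rfl⟩ := hsS
        have h1 := hs p ⟨le_refl _, hpy⟩
        rw [orbit_apply, hiterp] at h1
        simp only [ContinuousMap.const_apply] at h1
        have hyIcc : y ∈ Icc ((⇑φ)^[n] p) ((⇑φ)^[n] y) := by
          rw [hiterp]
          exact ⟨hpy, iter_ge hmono.monotone hA n⟩
        obtain ⟨x, hxI, hxy⟩ := intermediate_value_Icc hpy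
          ((φ.continuous.iterate n).continuousOn) hyIcc
        have h2 := hs x hxI
        rw [orbit_apply, hxy] at h2
        simp only [ContinuousMap.const_apply] at h2
        exact numA hr0 hne (min_le_left _ _) (min_le_right _ _) h1 h2
      · -- case B: bounded orbit
        rcases eq_or_lt_of_le hpy with heq | hpy'
        · rw [← heq]
        have hmem : ∀ n, (⇑φ)^[n] y ∈ Icc p y :=
          fun n => iter_mem_Icc_right hmono.monotone hp hpy hB n
        obtain ⟨z, hzI, hz0⟩ := isCompact_Icc.exists_isMaxOn (nonempty_Icc.2 hpy)
          ((continuous_abs.comp g.continuous).continuousOn)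
        have hz : ∀ x ∈ Icc p y, |g x| ≤ |g z| := fun x hx => hz0 hx
        set B : ℝ := |g z| with hB
        have hBr : |r| ≤ B := hz p ⟨le_refl _, hpy⟩
        set t : ℝ := 2 + 2*B with hts
        set f : C(ℝ,ℝ) := ⟨fun x => r + (t - r) * ramp p y x,
          by have := ramp_continuous p y; fun_prop⟩ with hf
        have hfp : f p = r := by
          show r + (t - r) * ramp p y p = r
          rw [ramp_of_le (le_refl p) hpy]; ring
        have hfy : f y = t := by
          show r + (t - r) * ramp p y y = t
          rw [ramp_of_ge (le_refl y) hpy']; ring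
        set ε : ℝ := min |r| 1 with hε
        have hε0 : 0 < ε := lt_min habs one_pos
        by_contra hne
        obtain ⟨s, hsS, hs⟩ := dense_hit hS f (isCompact_Icc (a := p) (b := y)) hε0
        obtain ⟨c, n, rfl⟩ := hsS
        have h1 := hs p ⟨le_refl _, hpy⟩
        rw [orbit_apply, hiterp, hfp] at h1
        have h2 := hs y ⟨hpy, le_refl _⟩
        rw [orbit_apply, hfy] at h2
        exact numB hr0 hBr (hz _ (hmem n)) hts (min_le_left _ _) (min_le_right _ _) h1 h2
    · rcases le_total (φ y) y with hA | hB
      · by_contra hne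
        set ε : ℝ := min (|g y - r|/4) (|r|/2) with hε
        have hd0 : 0 < |g y - r| := abs_pos.2 (sub_ne_zero.2 hne)
        have hε0 : 0 < ε := lt_min (by linarith) (by linarith)
        obtain ⟨s, hsS, hs⟩ := dense_hit hS (ContinuousMap.const ℝ r)
          (isCompact_Icc (a := y) (b := p)) hε0
        obtain ⟨c, n, rfl⟩ := hsS
        have h1 := hs p ⟨hyp, le_refl _⟩
        rw [orbit_apply, hiterp] at h1
        simp only [ContinuousMap.const_apply] at h1
        have hyIcc : y ∈ Icc ((⇑φ)^[n] y) ((⇑φ)^[n] p) := by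
          rw [hiterp]
          exact ⟨iter_le hmono.monotone hA n, hyp⟩
        obtain ⟨x, hxI, hxy⟩ := intermediate_value_Icc hyp
          ((φ.continuous.iterate n).continuousOn) hyIcc
        have h2 := hs x hxI
        rw [orbit_apply, hxy] at h2
        simp only [ContinuousMap.const_apply] at h2
        exact numA hr0 hne (min_le_left _ _) (min_le_right _ _) h1 h2
      · rcases eq_or_lt_of_le hyp with heq | hyp'
        · rw [heq]
        have hmem : ∀ n, (⇑φ)^[n] y ∈ Icc y p :=
          fun n => iter_mem_Icc_left hmono.monotone hp hyp hB n
        obtain ⟨z, hzI, hz0⟩ := isCompact_Icc.exists_isMaxOn (nonempty_Icc.2 hyp)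
          ((continuous_abs.comp g.continuous).continuousOn)
        have hz : ∀ x ∈ Icc y p, |g x| ≤ |g z| := fun x hx => hz0 hx
        set B : ℝ := |g z| with hB
        have hBr : |r| ≤ B := hz p ⟨hyp, le_refl _⟩
        set t : ℝ := 2 + 2*B with hts
        set f : C(ℝ,ℝ) := ⟨fun x => t + (r - t) * ramp y p x,
          by have := ramp_continuous y p; fun_prop⟩ with hf
        have hfp : f p = r := by
          show t + (r - t) * ramp y p p = r
          rw [ramp_of_ge (le_refl p) hyp']; ring
        have hfy : f y = t := by
          show t + (r - t) * ramp y p y = t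
          rw [ramp_of_le (le_refl y) hyp]; ring
        set ε : ℝ := min |r| 1 with hε
        have hε0 : 0 < ε := lt_min habs one_pos
        by_contra hne
        obtain ⟨s, hsS, hs⟩ := dense_hit hS f (isCompact_Icc (a := y) (b := p)) hε0
        obtain ⟨c, n, rfl⟩ := hsS
        have h1 := hs p ⟨hyp, le_refl _⟩
        rw [orbit_apply, hiterp, hfp] at h1
        have h2 := hs y ⟨le_refl _, hyp⟩
        rw [orbit_apply, hfy] at h2
        exact numB hr0 hBr (hz _ (hmem n)) hts (min_le_left _ _) (min_le_right _ _) h1 h2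
  exact const_not_dense φ g r hclaim hS

lemma not_anti_of_dense (φ g : C(ℝ,ℝ)) (hanti : StrictAnti ⇑φ)
    (hS : Dense {h : C(ℝ,ℝ) | ∃ c : ℝ, ∃ n : ℕ, h = c • (g.comp (cmIter φ n))}) :
    False := by
  obtain ⟨p, hp⟩ := anti_fixed φ.continuous hanti
  have hiterp : ∀ n, (⇑φ)^[n] p = p := fun n => Function.iterate_fixed hp n
  have hr0 : g p ≠ 0 := gp_ne_zero φ g hiterp hS
  set r : ℝ := g p with hr
  have habs : 0 < |r| := abs_pos.2 hr0
  set ψ : ℝ → ℝ := ⇑φ ∘ ⇑φ with hψdef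
  have hψmono : StrictMono ψ := hanti.comp hanti
  have hψcont : Continuous ψ := φ.continuous.comp φ.continuous
  have hψp : ψ p = p := by
    show φ (φ p) = p
    rw [hp, hp]
  have hψiterp : ∀ m, ψ^[m] p = p := fun m => Function.iterate_fixed hψp m
  have hφ2 : (⇑φ)^[2] = ψ := by
    funext z
    show (⇑φ)^[2] z = φ (φ z)
    rw [show (2:ℕ) = 1 + 1 from rfl, Function.iterate_add_apply, Function.iterate_one]
  have h2ψ : ∀ m : ℕ, (⇑φ)^[2*m] = ψ^[m] := fun m => by
    rw [Function.iterate_mul, hφ2]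
  -- parity decomposition
  have hpar : ∀ n : ℕ, ∃ m : ℕ, ((⇑φ)^[n] = ψ^[m]) ∨ ((⇑φ)^[n] = ⇑φ ∘ ψ^[m]) := by
    intro n
    rcases Nat.even_or_odd n with ⟨m, hm⟩ | ⟨m, hm⟩
    · refine ⟨m, Or.inl ?_⟩
      rw [show n = 2*m by omega, h2ψ]
    · refine ⟨m, Or.inr ?_⟩
      rw [hm]
      funext z
      have hz1 : (⇑φ)^[2*m+1] z = φ ((⇑φ)^[2*m] z) := Function.iterate_succ_apply' _ _ _
      rw [hz1, h2ψ]
      rfl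
  -- step 1 : pointwise dichotomy
  have hs1 : ∀ y, y ≠ p → (g y = r ∨ g (φ y) = r) := by
    intro y hyne
    rcases lt_or_gt_of_ne hyne with hyp | hpy
    · -- y < p, φ y > p
      have hφy : p < φ y := by
        rw [← hp]; exact hanti hyp
      rcases le_total (ψ y) y with hA | hB
      · -- IVT case
        by_contra hcon
        push_neg at hcon
        obtain ⟨hc1, hc2⟩ := hcon
        set ε : ℝ := min (min (|g y - r|/4) (|g (φ y) - r|/4)) (|r|/2) with hε
        have hd1 : 0 < |g y - r| := abs_pos.2 (sub_ne_zero.2 hc1)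
        have hd2 : 0 < |g (φ y) - r| := abs_pos.2 (sub_ne_zero.2 hc2)
        have hε0 : 0 < ε := lt_min (lt_min (by linarith) (by linarith)) (by linarith)
        obtain ⟨s, hsS, hs⟩ := dense_hit hS (ContinuousMap.const ℝ r)
          (isCompact_Icc (a := y) (b := p)) hε0
        obtain ⟨c, n, rfl⟩ := hsS
        have h1 := hs p ⟨hyp.le, le_refl _⟩
        rw [orbit_apply, hiterp] at h1
        simp only [ContinuousMap.const_apply] at h1
        obtain ⟨m, hml⟩ := hpar n
        have hyIcc : y ∈ Icc (ψ^[m] y) (ψ^[m] p) := by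
          rw [hψiterp]
          exact ⟨iter_le hψmono.monotone hA m, hyp.le⟩
        obtain ⟨x, hxI, hx⟩ := intermediate_value_Icc hyp.le
          ((hψcont.iterate m).continuousOn) hyIcc
        have h2 := hs x hxI
        rw [orbit_apply] at h2
        simp only [ContinuousMap.const_apply] at h2
        rcases hml with hml | hml
        · rw [hml, hx] at h2
          refine numA hr0 hc1 ?_ ?_ h1 h2
          · exact le_trans (min_le_left _ _) (min_le_left _ _)
          · exact min_le_right _ _
        · rw [hml] at h2
          simp only [Function.comp_apply] at h2
          rw [hx] at h2
          refine numA hr0 hc2 ?_ ?_ h1 h2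
          · exact le_trans (min_le_left _ _) (min_le_right _ _)
          · exact min_le_right _ _
      · -- bounded case : φ^[n] y ∈ Icc y (φ y)
        exfalso
        have hyφy : y ≤ φ y := by linarith
        have hmem : ∀ n, (⇑φ)^[n] y ∈ Icc y (φ y) := by
          intro n
          induction n with
          | zero => exact ⟨le_refl _, hyφy⟩
          | succ n ih =>
            rw [Function.iterate_succ_apply']
            constructor
            · calc y ≤ ψ y := hB
              _ = φ (φ y) := rfl
              _ ≤ φ ((⇑φ)^[n] y) := hanti.antitone ih.2
            · exact hanti.antitone ih.1
        obtain ⟨z, hzI, hz0⟩ := isCompact_Icc.exists_isMaxOn (nonempty_Icc.2 hyφy)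
          ((continuous_abs.comp g.continuous).continuousOn)
        have hz : ∀ x ∈ Icc y (φ y), |g x| ≤ |g z| := fun x hx => hz0 hx
        set B : ℝ := |g z| with hB'
        have hBr : |r| ≤ B := hz p ⟨hyp.le, hφy.le⟩
        set t : ℝ := 2 + 2*B with hts
        set f : C(ℝ,ℝ) := ⟨fun x => t + (r - t) * ramp y p x,
          by have := ramp_continuous y p; fun_prop⟩ with hf
        have hfp : f p = r := by
          show t + (r - t) * ramp y p p = r
          rw [ramp_of_ge (le_refl p) hyp]; ring
        have hfy : f y = t := by
          show t + (r - t) * ramp y p y = t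
          rw [ramp_of_le (le_refl y) hyp.le]; ring
        set ε : ℝ := min |r| 1 with hε
        have hε0 : 0 < ε := lt_min habs one_pos
        obtain ⟨s, hsS, hs⟩ := dense_hit hS f (isCompact_Icc (a := y) (b := φ y)) hε0
        obtain ⟨c, n, rfl⟩ := hsS
        have h1 := hs p ⟨hyp.le, hφy.le⟩
        rw [orbit_apply, hiterp, hfp] at h1
        have h2 := hs y ⟨le_refl _, hyφy⟩
        rw [orbit_apply, hfy] at h2
        exact numB hr0 hBr (hz _ (hmem n)) hts (min_le_left _ _) (min_le_right _ _) h1 h2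
    · -- y > p, φ y < p
      have hφy : φ y < p := by
        rw [← hp]; exact hanti hpy
      rcases le_total y (ψ y) with hA | hB
      · by_contra hcon
        push_neg at hcon
        obtain ⟨hc1, hc2⟩ := hcon
        set ε : ℝ := min (min (|g y - r|/4) (|g (φ y) - r|/4)) (|r|/2) with hε
        have hd1 : 0 < |g y - r| := abs_pos.2 (sub_ne_zero.2 hc1)
        have hd2 : 0 < |g (φ y) - r| := abs_pos.2 (sub_ne_zero.2 hc2)
        have hε0 : 0 < ε := lt_min (lt_min (by linarith) (by linarith)) (by linarith)
        obtain ⟨s, hsS, hs⟩ := dense_hit hS (ContinuousMap.const ℝ r)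
          (isCompact_Icc (a := p) (b := y)) hε0
        obtain ⟨c, n, rfl⟩ := hsS
        have h1 := hs p ⟨le_refl _, hpy.le⟩
        rw [orbit_apply, hiterp] at h1
        simp only [ContinuousMap.const_apply] at h1
        obtain ⟨m, hml⟩ := hpar n
        have hyIcc : y ∈ Icc (ψ^[m] p) (ψ^[m] y) := by
          rw [hψiterp]
          exact ⟨hpy.le, iter_ge hψmono.monotone hA m⟩
        obtain ⟨x, hxI, hx⟩ := intermediate_value_Icc hpy.le
          ((hψcont.iterate m).continuousOn) hyIcc
        have h2 := hs x hxI
        rw [orbit_apply] at h2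
        simp only [ContinuousMap.const_apply] at h2
        rcases hml with hml | hml
        · rw [hml, hx] at h2
          refine numA hr0 hc1 ?_ ?_ h1 h2
          · exact le_trans (min_le_left _ _) (min_le_left _ _)
          · exact min_le_right _ _
        · rw [hml] at h2
          simp only [Function.comp_apply] at h2
          rw [hx] at h2
          refine numA hr0 hc2 ?_ ?_ h1 h2
          · exact le_trans (min_le_left _ _) (min_le_right _ _)
          · exact min_le_right _ _
      · exfalso
        have hφyy : φ y ≤ y := by linarith
        have hmem : ∀ n, (⇑φ)^[n] y ∈ Icc (φ y) y := by
          intro n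
          induction n with
          | zero => exact ⟨hφyy, le_refl _⟩
          | succ n ih =>
            rw [Function.iterate_succ_apply']
            constructor
            · exact hanti.antitone ih.2
            · calc φ ((⇑φ)^[n] y) ≤ φ (φ y) := hanti.antitone ih.1
              _ = ψ y := rfl
              _ ≤ y := hB
        obtain ⟨z, hzI, hz0⟩ := isCompact_Icc.exists_isMaxOn (nonempty_Icc.2 hφyy)
          ((continuous_abs.comp g.continuous).continuousOn)
        have hz : ∀ x ∈ Icc (φ y) y, |g x| ≤ |g z| := fun x hx => hz0 hx
        set B : ℝ := |g z| with hB'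
        have hBr : |r| ≤ B := hz p ⟨hφy.le, hpy.le⟩
        set t : ℝ := 2 + 2*B with hts
        set f : C(ℝ,ℝ) := ⟨fun x => r + (t - r) * ramp p y x,
          by have := ramp_continuous p y; fun_prop⟩ with hf
        have hfp : f p = r := by
          show r + (t - r) * ramp p y p = r
          rw [ramp_of_le (le_refl p) hpy.le]; ring
        have hfy : f y = t := by
          show r + (t - r) * ramp p y y = t
          rw [ramp_of_ge (le_refl y) hpy]; ring
        set ε : ℝ := min |r| 1 with hε
        have hε0 : 0 < ε := lt_min habs one_pos
        obtain ⟨s, hsS, hs⟩ := dense_hit hS f (isCompact_Icc (a := φ y) (b := y)) hε0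
        obtain ⟨c, n, rfl⟩ := hsS
        have h1 := hs p ⟨hφy.le, hpy.le⟩
        rw [orbit_apply, hiterp, hfp] at h1
        have h2 := hs y ⟨hφyy, le_refl _⟩
        rw [orbit_apply, hfy] at h2
        exact numB hr0 hBr (hz _ (hmem n)) hts (min_le_left _ _) (min_le_right _ _) h1 h2
  -- step 2 : conclude
  by_cases hex : ∃ y, y ≠ p ∧ g y ≠ r
  · obtain ⟨y₀, hy₀ne, hy₀⟩ := hex
    have hφy₀ne : φ y₀ ≠ p := by
      intro h
      exact hy₀ne (hanti.injective (by rw [h, hp]))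
    set δ : ℝ := min |y₀ - p| |φ y₀ - p| with hδ
    have hδ0 : 0 < δ := lt_min (abs_pos.2 (sub_ne_zero.2 hy₀ne))
      (abs_pos.2 (sub_ne_zero.2 hφy₀ne))
    set bump : C(ℝ,ℝ) := ⟨fun x => max 0 (1 - |x - p| / δ), by fun_prop⟩ with hbump
    have hbump_p : bump p = 1 := by
      show max 0 (1 - |p - p| / δ) = 1
      simp
    have hbump_far : ∀ x, δ ≤ |x - p| → bump x = 0 := by
      intro x hx
      show max 0 (1 - |x - p| / δ) = 0
      have h1 : 1 ≤ |x - p| / δ := (one_le_div hδ0).2 hx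
      exact max_eq_left (by linarith)
    set f : C(ℝ,ℝ) := ⟨fun x => (r + 1) - bump x, by
      have := bump.continuous; fun_prop⟩ with hf
    have hfp : f p = r := by
      show (r + 1) - bump p = r
      rw [hbump_p]; ring
    have hfy₀ : f y₀ = r + 1 := by
      show (r + 1) - bump y₀ = r + 1
      rw [hbump_far y₀ (min_le_left _ _)]; ring
    have hfφy₀ : f (φ y₀) = r + 1 := by
      show (r + 1) - bump (φ y₀) = r + 1
      rw [hbump_far (φ y₀) (min_le_right _ _)]; ring
    set lo : ℝ := min (min y₀ (φ y₀)) p with hlo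
    set hi : ℝ := max (max y₀ (φ y₀)) p with hhi
    obtain ⟨s, hsS, hs⟩ := dense_hit hS f (isCompact_Icc (a := lo) (b := hi))
      (show (0:ℝ) < 1/4 by norm_num)
    obtain ⟨c, n, rfl⟩ := hsS
    have hpmem : p ∈ Icc lo hi := ⟨min_le_right _ _, le_max_right _ _⟩
    have hy₀mem : y₀ ∈ Icc lo hi :=
      ⟨le_trans (min_le_left _ _) (min_le_left _ _),
       le_trans (le_max_left _ _) (le_max_left _ _)⟩
    have hφy₀mem : φ y₀ ∈ Icc lo hi :=
      ⟨le_trans (min_le_left _ _) (min_le_right _ _),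
       le_trans (le_max_right _ _) (le_max_left _ _)⟩
    have h1 := hs p hpmem
    rw [orbit_apply, hiterp, hfp] at h1
    have h2 := hs y₀ hy₀mem
    rw [orbit_apply, hfy₀] at h2
    have h3 := hs (φ y₀) hφy₀mem
    rw [orbit_apply, hfφy₀] at h3
    have hiterne : (⇑φ)^[n] y₀ ≠ p := by
      intro h
      apply hy₀ne
      have := hanti.injective.iterate n
      exact this (by rw [h, hiterp])
    have hcomm : (⇑φ)^[n] (φ y₀) = φ ((⇑φ)^[n] y₀) :=
      (Function.iterate_succ_apply φ n y₀).symm.trans (Function.iterate_succ_apply' φ n y₀)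
    rcases hs1 ((⇑φ)^[n] y₀) hiterne with hcase | hcase
    · rw [hcase] at h2
      have he : c * r - (r + 1) = (c * r - r) - 1 := by ring
      rw [he] at h2
      have := abs_lt.1 h1
      have := abs_lt.1 h2
      linarith
    · rw [hcomm, hcase] at h3
      have he : c * r - (r + 1) = (c * r - r) - 1 := by ring
      rw [he] at h3
      have := abs_lt.1 h1
      have := abs_lt.1 h3
      linarith
  · push_neg at hex
    have hconst : ∀ y, g y = r := by
      intro y
      by_cases h : y = p
      · rw [h]
      · exact hex y h
    exact const_not_dense φ g r hconst hS

lemma mixing_of_struct (φ : C(ℝ,ℝ)) (hmono : StrictMono ⇑φ)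
    (hd : (∀ x, x < φ x) ∨ (∀ x, φ x < x)) :
    ∀ U V : Set C(ℝ, ℝ), IsOpen U → IsOpen V → U.Nonempty → V.Nonempty →
      ∃ N : ℕ, ∀ n ≥ N,
        ((fun g : C(ℝ, ℝ) => g.comp (cmIter φ n)) '' U ∩ V).Nonempty := by
  intro U V hU hV ⟨f, hf⟩ ⟨f', hf'⟩
  obtain ⟨M₁, ε₁, hM₁, hε₁, hball₁⟩ := nhds_subset f (hU.mem_nhds hf)
  obtain ⟨M₂, ε₂, hM₂, hε₂, hball₂⟩ := nhds_subset f' (hV.mem_nhds hf')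
  set M := max M₁ M₂ with hM
  have hMM : -M ≤ M := by
    have : 0 < M := lt_of_lt_of_le hM₁ (le_max_left _ _)
    linarith
  have hsub₁ : Icc (-M₁) M₁ ⊆ Icc (-M) M := Icc_subset_Icc (by simp [hM]) (le_max_left _ _)
  have hsub₂ : Icc (-M₂) M₂ ⊆ Icc (-M) M := Icc_subset_Icc (by simp [hM]) (le_max_right _ _)
  rcases hd with hup | hdown
  · obtain ⟨N, hN⟩ := exists_iterate_gt φ.continuous hup (-M) M
    refine ⟨N, fun n hn => ?_⟩
    have hgtn : M < (⇑φ)^[n] (-M) := hN n hn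
    have hψm : StrictMono (⇑φ)^[n] := hmono.iterate n
    obtain ⟨G, hG⟩ := exists_inverse (φ.continuous.iterate n) hψm hMM f'
    set h : C(ℝ,ℝ) := ⟨glue f G M ((⇑φ)^[n] (-M)),
      glue_continuous f.continuous G.continuous _ _⟩ with hh
    have hhU : h ∈ U := by
      apply hball₁
      intro x hx
      have hx' : x ≤ M := le_trans hx.2 (le_max_left _ _)
      have : h x = f x := glue_left hgtn.le hx'
      simp [this, hε₁]
    have hhV : h.comp (cmIter φ n) ∈ V := by
      apply hball₂
      intro x hx
      have hx' : x ∈ Icc (-M) M := hsub₂ hx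
      have h1 : (⇑φ)^[n] (-M) ≤ (⇑φ)^[n] x := hψm.monotone hx'.1
      have h2 : h ((⇑φ)^[n] x) = G ((⇑φ)^[n] x) := glue_right hgtn h1
      have h3 : G ((⇑φ)^[n] x) = f' x := hG x hx'
      simp [ContinuousMap.comp_apply, cmIter_apply, h2, h3, hε₂]
    exact ⟨h.comp (cmIter φ n), ⟨h, hhU, rfl⟩, hhV⟩
  · obtain ⟨N, hN⟩ := exists_iterate_lt φ.continuous hdown M (-M)
    refine ⟨N, fun n hn => ?_⟩
    have hltn : (⇑φ)^[n] M < -M := hN n hn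
    have hψm : StrictMono (⇑φ)^[n] := hmono.iterate n
    obtain ⟨G, hG⟩ := exists_inverse (φ.continuous.iterate n) hψm hMM f'
    set h : C(ℝ,ℝ) := ⟨glue G f ((⇑φ)^[n] M) (-M),
      glue_continuous G.continuous f.continuous _ _⟩ with hh
    have hhU : h ∈ U := by
      apply hball₁
      intro x hx
      have hx' : -M ≤ x := le_trans (by simp [hM] : -M ≤ -M₁) hx.1
      have : h x = f x := glue_right hltn hx'
      simp [this, hε₁]
    have hhV : h.comp (cmIter φ n) ∈ V := by
      apply hball₂
      intro x hx
      have hx' : x ∈ Icc (-M) M := hsub₂ hx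
      have h1 : (⇑φ)^[n] x ≤ (⇑φ)^[n] M := hψm.monotone hx'.2
      have h2 : h ((⇑φ)^[n] x) = G ((⇑φ)^[n] x) := glue_left hltn.le h1
      have h3 : G ((⇑φ)^[n] x) = f' x := hG x hx'
      simp [ContinuousMap.comp_apply, cmIter_apply, h2, h3, hε₂]
    exact ⟨h.comp (cmIter φ n), ⟨h, hhU, rfl⟩, hhV⟩

lemma exists_dense_orbit_up (φ : C(ℝ,ℝ)) (hmono : StrictMono ⇑φ) (hup : ∀ x, x < φ x) :
    ∃ g : C(ℝ,ℝ), Dense {h : C(ℝ,ℝ) | ∃ c : ℝ, ∃ n : ℕ,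
      h = c • (g.comp (cmIter φ n))} := by
  classical
  obtain ⟨D, hDc, hDd⟩ := TopologicalSpace.exists_countable_dense C(ℝ,ℝ)
  have hDne : D.Nonempty := hDd.nonempty
  haveI : Countable D := hDc.to_subtype
  haveI : Nonempty D := ⟨⟨hDne.choose, hDne.choose_spec⟩⟩
  obtain ⟨u, hu⟩ := exists_surjective_nat (D × ℕ)
  set fk : ℕ → C(ℝ,ℝ) := fun k => ((u k).1 : C(ℝ,ℝ)) with hfk_def
  set Mk : ℕ → ℝ := fun k => ((u k).2 : ℝ) + 1 with hMk_def
  have hMk1 : ∀ k, (1:ℝ) ≤ Mk k := fun k => le_add_of_nonneg_left (Nat.cast_nonneg _)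
  have hMM : ∀ k, -(Mk k) ≤ Mk k := fun k => by linarith [hMk1 k]
  have hgt : ∀ a C : ℝ, ∃ N, ∀ n ≥ N, C < (⇑φ)^[n] a := exists_iterate_gt φ.continuous hup
  let step : ℝ → ℝ → ℕ := fun a C => (hgt a C).choose
  have hstep : ∀ a C, C < (⇑φ)^[step a C] a := fun a C => (hgt a C).choose_spec _ (le_refl _)
  let seq : ℕ → ℕ × ℝ := fun k => Nat.rec
    ((step (-(Mk 0)) (Mk 0)), (⇑φ)^[step (-(Mk 0)) (Mk 0)] (Mk 0))
    (fun k ih =>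
      ((step (-(Mk (k+1))) (max (Mk (k+1)) ih.2)),
        (⇑φ)^[step (-(Mk (k+1))) (max (Mk (k+1)) ih.2)] (Mk (k+1)))) k
  set nk : ℕ → ℕ := fun k => (seq k).1 with hnk_def
  set Rk : ℕ → ℝ := fun k => (seq k).2 with hRk_def
  have hR : ∀ k, Rk k = (⇑φ)^[nk k] (Mk k) := by
    intro k; cases k <;> rfl
  have hL0 : Mk 0 < (⇑φ)^[nk 0] (-(Mk 0)) := hstep _ _
  have hLs : ∀ k, max (Mk (k+1)) (Rk k) < (⇑φ)^[nk (k+1)] (-(Mk (k+1))) := fun k => hstep _ _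
  have hLM : ∀ k, Mk k < (⇑φ)^[nk k] (-(Mk k)) := by
    intro k
    cases k with
    | zero => exact hL0
    | succ k => exact lt_of_le_of_lt (le_max_left _ _) (hLs k)
  have hLR : ∀ k, Rk k < (⇑φ)^[nk (k+1)] (-(Mk (k+1))) := fun k =>
    lt_of_le_of_lt (le_max_right _ _) (hLs k)
  have hLleR : ∀ k, (⇑φ)^[nk k] (-(Mk k)) ≤ Rk k := by
    intro k; rw [hR k]; exact (hmono.iterate _).monotone (hMM k)
  have hRlt : ∀ k, Rk k < Rk (k+1) := fun k => lt_of_lt_of_le (hLR k) (hLleR (k+1))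
  have hRmono : Monotone Rk := (strictMono_nat_of_lt_succ hRlt).monotone
  have hGex : ∀ k, ∃ G : C(ℝ,ℝ), ∀ x ∈ Icc (-(Mk k)) (Mk k),
      G ((⇑φ)^[nk k] x) = fk k x :=
    fun k => exists_inverse (φ.continuous.iterate _) (hmono.iterate _) (hMM k) (fk k)
  choose G hG using hGex
  let gs : ℕ → C(ℝ,ℝ) := fun k => Nat.rec (G 0)
    (fun k ih => ⟨glue ih (G (k+1)) (Rk k) ((⇑φ)^[nk (k+1)] (-(Mk (k+1)))),
      glue_continuous ih.continuous (G (k+1)).continuous _ _⟩) k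
  have hgs_succ : ∀ k x, x ≤ Rk k → gs (k+1) x = gs k x := fun k x hx =>
    glue_left (hLR k).le hx
  have hgs_agree : ∀ k x, x ∈ Icc ((⇑φ)^[nk k] (-(Mk k))) (Rk k) → gs k x = G k x := by
    intro k x hx
    cases k with
    | zero => rfl
    | succ k => exact glue_right (hLR k) hx.1
  have hstab : ∀ j k, j ≤ k → ∀ x, x ≤ Rk j → gs k x = gs j x := by
    intro j k hjk
    induction k with
    | zero =>
      have : j = 0 := Nat.le_zero.1 hjk
      subst this; intro x _; rfl
    | succ k ih =>
      rcases Nat.lt_or_ge j (k+1) with h | h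
      · intro x hx
        have hjk' : j ≤ k := Nat.lt_succ_iff.1 h
        rw [hgs_succ k x (le_trans hx (hRmono hjk'))]
        exact ih hjk' x hx
      · have : j = k + 1 := le_antisymm hjk h
        subst this; intro x _; rfl
  have hex : ∀ x : ℝ, ∃ k, x < Rk k := by
    intro x
    obtain ⟨m, hm⟩ := exists_nat_gt x
    obtain ⟨k, hk⟩ := hu (⟨hDne.choose, hDne.choose_spec⟩, m)
    refine ⟨k, ?_⟩
    have h1 : Mk k = (m : ℝ) + 1 := by rw [hMk_def]; simp [hk]
    have h2 : x < Mk k := by rw [h1]; linarith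
    exact lt_of_lt_of_le (lt_trans h2 (hLM k)) (hLleR k)
  let gf : ℝ → ℝ := fun x => gs (Nat.find (hex x)) x
  have hgf_eq : ∀ k x, x ≤ Rk k → gf x = gs k x := by
    intro k x hx
    have hfind : x < Rk (Nat.find (hex x)) := Nat.find_spec (hex x)
    rcases le_total (Nat.find (hex x)) k with h | h
    · exact (hstab _ k h x hfind.le).symm
    · exact hstab k _ h x hx
  have hgf_cont : Continuous gf := by
    rw [continuous_iff_continuousAt]
    intro x
    have hfind : x < Rk (Nat.find (hex x)) := Nat.find_spec (hex x)
    have hev : gf =ᶠ[𝓝 x] ⇑(gs (Nat.find (hex x))) := by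
      filter_upwards [Iio_mem_nhds hfind] with y hy
      exact hgf_eq _ y (le_of_lt hy)
    exact ((gs (Nat.find (hex x))).continuous.continuousAt).congr hev.symm
  set g : C(ℝ,ℝ) := ⟨gf, hgf_cont⟩ with hg_def
  have hgJ : ∀ k x, x ∈ Icc ((⇑φ)^[nk k] (-(Mk k))) (Rk k) → g x = G k x := fun k x hx =>
    (hgf_eq k x hx.2).trans (hgs_agree k x hx)
  have horb : ∀ k x, x ∈ Icc (-(Mk k)) (Mk k) → g ((⇑φ)^[nk k] x) = fk k x := by
    intro k x hx
    have hmem : (⇑φ)^[nk k] x ∈ Icc ((⇑φ)^[nk k] (-(Mk k))) (Rk k) :=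
      ⟨(hmono.iterate _).monotone hx.1, by rw [hR k]; exact (hmono.iterate _).monotone hx.2⟩
    rw [hgJ _ _ hmem]
    exact hG k x hx
  refine ⟨g, ?_⟩
  rw [dense_iff_inter_open]
  rintro W hW ⟨f₀, hf₀⟩
  obtain ⟨M, ε, hM, hε, hball⟩ := nhds_subset f₀ (hW.mem_nhds hf₀)
  obtain ⟨d, hd1, hd2⟩ : ∃ d ∈ D, ∀ x ∈ Icc (-M) M, |d x - f₀ x| < ε := by
    obtain ⟨s, hs1, hs2⟩ := mem_closure_iff_nhds.1 (hDd f₀) _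
      (ball_mem_nhds f₀ isCompact_Icc hε)
    exact ⟨s, hs2, hs1⟩
  obtain ⟨m, hm⟩ := exists_nat_gt M
  obtain ⟨k, hk⟩ := hu (⟨d, hd1⟩, m)
  have hfk : fk k = d := by rw [hfk_def]; simp [hk]
  have hMk' : M ≤ Mk k := by
    rw [hMk_def]; simp [hk]; push_cast; linarith
  refine ⟨g.comp (cmIter φ (nk k)), ?_, ⟨1, nk k, (one_smul _ _).symm⟩⟩
  apply hball
  intro x hx
  have hx' : x ∈ Icc (-(Mk k)) (Mk k) := Icc_subset_Icc (neg_le_neg hMk') hMk' hx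
  have h9 : g.comp (cmIter φ (nk k)) x = fk k x := horb k x hx'
  rw [h9, hfk]
  exact hd2 x hx

lemma exists_dense_orbit_down (φ : C(ℝ,ℝ)) (hmono : StrictMono ⇑φ) (hdown : ∀ x, φ x < x) :
    ∃ g : C(ℝ,ℝ), Dense {h : C(ℝ,ℝ) | ∃ c : ℝ, ∃ n : ℕ,
      h = c • (g.comp (cmIter φ n))} := by
  set η : C(ℝ,ℝ) := ⟨fun x => -x, continuous_neg⟩ with hη
  set φ' : C(ℝ,ℝ) := η.comp (φ.comp η) with hφ'
  have hφ'app : ∀ x, φ' x = -(φ (-x)) := fun x => rfl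
  have hm' : StrictMono ⇑φ' := by
    intro x y hxy
    simp only [hφ'app]
    have := hmono (show -y < -x by linarith)
    linarith
  have hup' : ∀ x, x < φ' x := by
    intro x
    have := hdown (-x)
    simp only [hφ'app]
    linarith
  obtain ⟨g', hS'⟩ := exists_dense_orbit_up φ' hm' hup'
  have hconj : ∀ n x, (⇑φ')^[n] x = -((⇑φ)^[n] (-x)) := by
    intro n
    induction n with
    | zero => intro x; simp
    | succ n ih =>
      intro x
      rw [Function.iterate_succ_apply', Function.iterate_succ_apply', ih x, hφ'app]
      simp
  set Θ : C(ℝ,ℝ) → C(ℝ,ℝ) := fun h => h.comp η with hΘ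
  have hcont : Continuous Θ := ContinuousMap.continuous_precomp η
  have hinv : ∀ h, Θ (Θ h) = h := by
    intro h
    ext x
    simp [hΘ, hη]
  let Θh : C(ℝ,ℝ) ≃ₜ C(ℝ,ℝ) :=
    { toFun := Θ, invFun := Θ, left_inv := hinv, right_inv := hinv,
      continuous_toFun := hcont, continuous_invFun := hcont }
  have hkey : ∀ (c : ℝ) (n : ℕ),
      Θ (c • (g'.comp (cmIter φ' n))) = c • ((g'.comp η).comp (cmIter φ n)) := by
    intro c n
    ext x
    simp only [hΘ, ContinuousMap.comp_apply, ContinuousMap.smul_apply, smul_eq_mul]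
    congr 1
    show g' ((⇑φ')^[n] (η x)) = g' (η ((⇑φ)^[n] x))
    rw [hconj n]
    show g' (-((⇑φ)^[n] (- - x))) = _
    rw [neg_neg]
    rfl
  refine ⟨g'.comp η, ?_⟩
  have him : Dense (Θ '' {h : C(ℝ,ℝ) | ∃ c : ℝ, ∃ n : ℕ, h = c • (g'.comp (cmIter φ' n))}) :=
    Θh.surjective.denseRange.dense_image hcont hS'
  have hset : Θ '' {h : C(ℝ,ℝ) | ∃ c : ℝ, ∃ n : ℕ, h = c • (g'.comp (cmIter φ' n))} =
      {h : C(ℝ,ℝ) | ∃ c : ℝ, ∃ n : ℕ, h = c • ((g'.comp η).comp (cmIter φ n))} := by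
    ext h
    constructor
    · rintro ⟨h', ⟨c, n, rfl⟩, rfl⟩
      exact ⟨c, n, (hkey c n).symm.symm⟩
    · rintro ⟨c, n, rfl⟩
      exact ⟨c • (g'.comp (cmIter φ' n)), ⟨c, n, rfl⟩, hkey c n⟩
  rwa [hset] at him

lemma mixing_no_fixed (φ : C(ℝ,ℝ))
    (hmix : ∀ U V : Set C(ℝ, ℝ), IsOpen U → IsOpen V → U.Nonempty → V.Nonempty →
      ∃ N : ℕ, ∀ n ≥ N,
        ((fun g : C(ℝ, ℝ) => g.comp (cmIter φ n)) '' U ∩ V).Nonempty)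
    (p : ℝ) (hp : φ p = p) : False := by
  set U : Set C(ℝ,ℝ) := {h | |h p| < 1} with hU
  set V : Set C(ℝ,ℝ) := {h | |h p - 3| < 1} with hV
  have hUo : IsOpen U := by
    have : U = (fun h : C(ℝ,ℝ) => h p) ⁻¹' (Metric.ball 0 1) := by
      ext h; simp [hU, Real.dist_eq, Metric.mem_ball]
    rw [this]
    exact Metric.isOpen_ball.preimage (continuous_eval_const p)
  have hVo : IsOpen V := by
    have : V = (fun h : C(ℝ,ℝ) => h p) ⁻¹' (Metric.ball 3 1) := by
      ext h; simp [hV, Real.dist_eq, Metric.mem_ball]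
    rw [this]
    exact Metric.isOpen_ball.preimage (continuous_eval_const p)
  have hUne : U.Nonempty := ⟨ContinuousMap.const ℝ 0, by simp [hU]⟩
  have hVne : V.Nonempty := ⟨ContinuousMap.const ℝ 3, by simp [hV]⟩
  obtain ⟨N, hN⟩ := hmix U V hUo hVo hUne hVne
  obtain ⟨v, ⟨u, hu, rfl⟩, hv⟩ := hN N (le_refl N)
  have h1 : u.comp (cmIter φ N) p = u p := by
    show u ((⇑φ)^[N] p) = u p
    rw [Function.iterate_fixed hp]
  rw [hU] at hu
  rw [hV] at hv
  simp only [mem_setOf_eq] at hu hv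
  rw [h1] at hv
  have := abs_lt.1 hu
  have := abs_lt.1 hv
  linarith

lemma mixing_inj (φ : C(ℝ,ℝ))
    (hmix : ∀ U V : Set C(ℝ, ℝ), IsOpen U → IsOpen V → U.Nonempty → V.Nonempty →
      ∃ N : ℕ, ∀ n ≥ N,
        ((fun g : C(ℝ, ℝ) => g.comp (cmIter φ n)) '' U ∩ V).Nonempty) :
    Function.Injective ⇑φ := by
  intro a b hab
  by_contra hne
  set U : Set C(ℝ,ℝ) := {h | 1 < h a - h b} with hU
  have hUo : IsOpen U := by
    have : U = (fun h : C(ℝ,ℝ) => h a - h b) ⁻¹' (Ioi 1) := rfl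
    rw [this]
    exact isOpen_Ioi.preimage ((continuous_eval_const a).sub
      (continuous_eval_const b))
  have hUne : U.Nonempty := by
    refine ⟨⟨fun x => 2 * (x - b) / (a - b), by
      have : a - b ≠ 0 := sub_ne_zero.2 hne
      fun_prop⟩, ?_⟩
    show 1 < 2 * (a - b) / (a - b) - 2 * (b - b) / (a - b)
    have h0 : a - b ≠ 0 := sub_ne_zero.2 hne
    rw [mul_div_assoc, div_self h0]
    simp
  obtain ⟨N, hN⟩ := hmix U U hUo hUo hUne hUne
  obtain ⟨v, ⟨u, hu, rfl⟩, hv⟩ := hN (N + 1) (Nat.le_succ N)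
  have hiter : (⇑φ)^[N+1] a = (⇑φ)^[N+1] b := by
    rw [Function.iterate_succ_apply, Function.iterate_succ_apply, hab]
  rw [hU] at hu hv
  simp only [mem_setOf_eq] at hu hv
  have h1 : u.comp (cmIter φ (N+1)) a - u.comp (cmIter φ (N+1)) b = 0 := by
    show u ((⇑φ)^[N+1] a) - u ((⇑φ)^[N+1] b) = 0
    rw [hiter, sub_self]
  rw [h1] at hv
  norm_num at hv

/-- For a continuous `φ : ℝ → ℝ`, the composition operator `C_φ : g ↦ g ∘ φ` on
`C(ℝ)` with the compact-open topology is supercyclic iff it is mixing. -/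
theorem compositionOperator_supercyclic_iff_mixing (φ : C(ℝ, ℝ)) :
    (∃ g : C(ℝ, ℝ), Dense {h : C(ℝ, ℝ) | ∃ c : ℝ, ∃ n : ℕ,
        h = c • (g.comp (cmIter φ n))}) ↔
    (∀ U V : Set C(ℝ, ℝ), IsOpen U → IsOpen V → U.Nonempty → V.Nonempty →
      ∃ N : ℕ, ∀ n ≥ N,
        ((fun g : C(ℝ, ℝ) => g.comp (cmIter φ n)) '' U ∩ V).Nonempty) := by
  constructor
  · rintro ⟨g, hS⟩
    have hinj : Function.Injective ⇑φ := inj_of_dense φ g hS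
    rcases Continuous.strictMono_of_inj φ.continuous hinj with hmono | hanti
    · have hnf : ∀ x, φ x ≠ x := fun x hx => no_fixed_of_dense_mono φ g hmono hS x hx
      exact mixing_of_struct φ hmono (dichotomy φ.continuous hnf)
    · exact (not_anti_of_dense φ g hanti hS).elim
  · intro hmix
    have hinj := mixing_inj φ hmix
    rcases Continuous.strictMono_of_inj φ.continuous hinj with hmono | hanti
    · have hnf : ∀ x, φ x ≠ x := fun x hx => mixing_no_fixed φ hmix x hx
      rcases dichotomy φ.continuous hnf with hup | hdown
      · exact exists_dense_orbit_up φ hmono hup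
      · exact exists_dense_orbit_down φ hmono hdown
    · obtain ⟨p, hp⟩ := anti_fixed φ.continuous hanti
      exact (mixing_no_fixed φ hmix p hp).elim
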